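/- Let M be a divisibility monoid and a an element of M such that Δ_R(a) exists. Then Δ_R(Δ_R(a)) exists and equals Δ_R(a); consequently Δ_R(a) is quasi-central. -/

import Mathlib

/-- `LDvd b a` : `b` left-divides `a`, i.e. `a = b * d` for some `d`. -/
def LDvd {M : Type*} [Monoid M] (b a : M) : Prop := ∃ d, a = b * d

/-- `c` is a right lcm of `a` and `b`. -/
def IsRightLcm {M : Type*} [Monoid M] (a b c : M) : Prop :=
  LDvd a c ∧ LDvd b c ∧ ∀ m, LDvd a m → LDvd b m → LDvd c m

/-- `1` is the only invertible element. -/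
def Conical (M : Type*) [Monoid M] : Prop := ∀ u : M, IsUnit u → u = 1

/-- Left and right cancellativity. -/
def Cancellative (M : Type*) [Monoid M] : Prop :=
  (∀ a b c : M, a * b = a * c → b = c) ∧ (∀ a b c : M, b * a = c * a → b = c)

/-- `IsRes a b r` : `r` is the residue `a \ b`, i.e. `a * r` is the right lcm `a ∨ b`. -/
def IsRes {M : Type*} [Monoid M] (a b r : M) : Prop := IsRightLcm a b (a * r)

/-- The set of irreducible elements of `M`. -/
def Irr (M : Type*) [Monoid M] : Set M :=
  {a | a ≠ 1 ∧ ∀ b c : M, a = b * c → b = 1 ∨ c = 1}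

/-- `a` is quasi-central: `aΣ = Σa` where `Σ` is the set of irreducible elements. -/
def QuasiCentral {M : Type*} [Monoid M] (a : M) : Prop :=
  (fun x => a * x) '' Irr M = (fun x => x * a) '' Irr M

/-- `g` is a left gcd of `a` and `b`. -/
def IsLeftGcd {M : Type*} [Monoid M] (a b g : M) : Prop :=
  LDvd g a ∧ LDvd g b ∧ ∀ d, LDvd d a → LDvd d b → LDvd d g

/-- `j` is the join of `x` and `y` inside the lattice `↓(a)` of left divisors of `a`. -/
def IsJoinIn {M : Type*} [Monoid M] (a x y j : M) : Prop :=
  LDvd j a ∧ LDvd x j ∧ LDvd y j ∧ ∀ m, LDvd m a → LDvd x m → LDvd y m → LDvd j m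

/-- A (left) divisibility monoid : cancellative, finitely generated by its irreducible
elements, any two elements admit a left gcd, and every `↓(a)` is a finite distributive
lattice under left divisibility (meets are left gcds, joins exist, distributivity holds). -/
structure IsDivisibilityMonoid (M : Type*) [Monoid M] : Prop where
  mul_left_cancel : ∀ a b c : M, a * b = a * c → b = c
  mul_right_cancel : ∀ a b c : M, b * a = c * a → b = c
  irr_finite : (Irr M).Finite
  irr_gen : ∀ a : M, a ∈ Submonoid.closure (Irr M)
  exists_gcd : ∀ a b : M, ∃ g, IsLeftGcd a b g
  divisors_finite : ∀ a : M, {b : M | LDvd b a}.Finite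
  exists_join : ∀ a x y : M, LDvd x a → LDvd y a → ∃ j, IsJoinIn a x y j
  distrib : ∀ a x y z : M, LDvd x a → LDvd y a → LDvd z a →
    ∀ jyz g gxy gxz j', IsJoinIn a y z jyz → IsLeftGcd x jyz g →
      IsLeftGcd x y gxy → IsLeftGcd x z gxz → IsJoinIn a gxy gxz j' → g = j'

/-- `d` is the (right) local delta of `a`: the right lcm of the set `{b \ a : b ∈ M}`,
all of whose elements are required to exist. -/
def IsLocalDelta {M : Type*} [Monoid M] (a d : M) : Prop :=
  (∀ b : M, ∃ r, IsRes b a r) ∧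
  (∀ b r : M, IsRes b a r → LDvd r d) ∧
  ∀ m : M, (∀ b r : M, IsRes b a r → LDvd r m) → LDvd d m

section Basics
variable {M : Type*} [Monoid M]

lemma ldvd_refl (a : M) : LDvd a a := ⟨1, (mul_one a).symm⟩

lemma ldvd_trans {a b c : M} (h1 : LDvd a b) (h2 : LDvd b c) : LDvd a c := by
  obtain ⟨x, rfl⟩ := h1; obtain ⟨y, rfl⟩ := h2; exact ⟨x * y, mul_assoc a x y⟩

lemma one_ldvd (a : M) : LDvd 1 a := ⟨a, (one_mul a).symm⟩

lemma ldvd_mul (a b : M) : LDvd a (a * b) := ⟨b, rfl⟩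

lemma unit_eq_one (hM : IsDivisibilityMonoid M) {u v : M} (huv : u * v = 1) : u = 1 := by
  have hu1 : LDvd u 1 := ⟨v, huv.symm⟩
  have hmapsu : ∀ m : M, LDvd u m := by
    intro m
    exact ⟨v * m, by rw [← mul_assoc, huv, one_mul]⟩
  exact hM.distrib 1 1 1 1 (one_ldvd 1) (one_ldvd 1) (one_ldvd 1) u u 1 1 1
    ⟨hu1, one_ldvd u, one_ldvd u, fun m _ _ _ => hmapsu m⟩
    ⟨hu1, ldvd_refl u, fun e _ h2 => h2⟩
    ⟨one_ldvd 1, one_ldvd 1, fun e _ h2 => h2⟩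
    ⟨one_ldvd 1, one_ldvd 1, fun e _ h2 => h2⟩
    ⟨one_ldvd 1, one_ldvd 1, one_ldvd 1, fun m _ _ h => h⟩

lemma ldvd_one_eq (hM : IsDivisibilityMonoid M) {u : M} (h : LDvd u 1) : u = 1 := by
  obtain ⟨v, hv⟩ := h; exact unit_eq_one hM hv.symm

lemma ldvd_antisymm (hM : IsDivisibilityMonoid M) {a b : M} (h1 : LDvd a b) (h2 : LDvd b a) : a = b := by
  obtain ⟨x, rfl⟩ := h1
  obtain ⟨y, hy⟩ := h2
  have hxy : x * y = 1 := by
    have := hM.mul_left_cancel a (x * y) 1 (by rw [mul_one, ← mul_assoc, ← hy])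
    exact this
  rw [unit_eq_one hM hxy, mul_one]

lemma ldvd_mul_cancel (hM : IsDivisibilityMonoid M) {a b c : M} (h : LDvd (a * b) (a * c)) : LDvd b c := by
  obtain ⟨t, ht⟩ := h
  exact ⟨t, hM.mul_left_cancel a c (b * t) (by rw [ht, mul_assoc])⟩

lemma mul_ldvd_mul {a b c : M} (h : LDvd b c) : LDvd (a * b) (a * c) := by
  obtain ⟨t, rfl⟩ := h; exact ⟨t, (mul_assoc a b t).symm⟩

lemma isRightLcm_unique (hM : IsDivisibilityMonoid M) {a b c c' : M} (h : IsRightLcm a b c) (h' : IsRightLcm a b c') :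
    c = c' :=
  ldvd_antisymm hM (h.2.2 c' h'.1 h'.2.1) (h'.2.2 c h.1 h.2.1)

lemma isRes_unique (hM : IsDivisibilityMonoid M) {a b r r' : M} (h : IsRes a b r) (h' : IsRes a b r') : r = r' :=
  hM.mul_left_cancel a r r' (isRightLcm_unique hM h h')

lemma isLeftGcd_unique (hM : IsDivisibilityMonoid M) {a b g g' : M} (h : IsLeftGcd a b g) (h' : IsLeftGcd a b g') :
    g = g' :=
  ldvd_antisymm hM (h'.2.2 g h.1 h.2.1) (h.2.2 g' h'.1 h'.2.1)

lemma isJoinIn_unique (hM : IsDivisibilityMonoid M) {a x y j j' : M} (h : IsJoinIn a x y j) (h' : IsJoinIn a x y j') :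
    j = j' :=
  ldvd_antisymm hM (h.2.2.2 j' h'.1 h'.2.1 h'.2.2.1) (h'.2.2.2 j h.1 h.2.1 h.2.2.1)

lemma lcm_of_cm (hM : IsDivisibilityMonoid M) {x y m : M} (hx : LDvd x m) (hy : LDvd y m) : ∃ l, IsRightLcm x y l := by
  obtain ⟨j, hj⟩ := hM.exists_join m x y hx hy
  refine ⟨j, hj.2.1, hj.2.2.1, ?_⟩
  intro k hxk hyk
  obtain ⟨g, hg⟩ := hM.exists_gcd m k
  have hxg : LDvd x g := hg.2.2 x hx hxk
  have hyg : LDvd y g := hg.2.2 y hy hyk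
  exact ldvd_trans (hj.2.2.2 g hg.1 hxg hyg) hg.2.1

lemma res_of_cm (hM : IsDivisibilityMonoid M) {b x m : M} (hb : LDvd b m) (hx : LDvd x m) : ∃ r, IsRes b x r := by
  obtain ⟨l, hl⟩ := lcm_of_cm hM hb hx
  obtain ⟨r, rfl⟩ := hl.1
  exact ⟨r, hl⟩

end Basics

section Good
variable {M : Type*} [Monoid M]

/-- `x` has residues under every element, all dividing `d`. -/
def GoodRes {M : Type*} [Monoid M] (d x : M) : Prop :=
  ∀ b : M, ∃ r, IsRes b x r ∧ LDvd r d

lemma isRes_one_self (x : M) : IsRes 1 x x := by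
  constructor
  · rw [one_mul]; exact one_ldvd x
  constructor
  · rw [one_mul]; exact ldvd_refl x
  · intro m _ h2; rw [one_mul]; exact h2

lemma goodRes_one (d : M) : GoodRes d 1 := by
  intro b
  refine ⟨1, ⟨?_, ?_, ?_⟩, one_ldvd d⟩
  · rw [mul_one]; exact ldvd_refl b
  · rw [mul_one]; exact one_ldvd b
  · intro m h1 _; rw [mul_one]; exact h1

lemma goodRes_res (hM : IsDivisibilityMonoid M) {a d : M} (hd : IsLocalDelta a d) {c r : M} (hcr : IsRes c a r) :
    GoodRes d r := by
  intro b
  obtain ⟨r', hr'⟩ := hd.1 (c * b)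
  have hr'd : LDvd r' d := hd.2.1 (c * b) r' hr'
  refine ⟨r', ⟨ldvd_mul b r', ?_, ?_⟩, hr'd⟩
  · -- r ∣ b * r'
    have hcm : LDvd (c * r) (c * b * r') := by
      apply hcr.2.2 (c * b * r')
      · exact ldvd_trans (ldvd_mul c b) (ldvd_mul (c * b) r')
      · exact hr'.2.1
    rw [mul_assoc] at hcm
    exact ldvd_mul_cancel hM hcm
  · -- minimality
    intro m hbm hrm
    have h1 : LDvd (c * b) (c * m) := by
      obtain ⟨t, rfl⟩ := hbm; exact ⟨t, by rw [mul_assoc]⟩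
    have h2 : LDvd a (c * m) := by
      refine ldvd_trans hcr.2.1 ?_
      obtain ⟨t, rfl⟩ := hrm; exact ⟨t, by rw [mul_assoc]⟩
    have h3 : LDvd (c * b * r') (c * m) := hr'.2.2 (c * m) h1 h2
    rw [mul_assoc] at h3
    exact ldvd_mul_cancel hM h3

lemma goodRes_lcm (hM : IsDivisibilityMonoid M) {d x y j : M} (hxd : LDvd x d) (hyd : LDvd y d)
    (hx : GoodRes d x) (hy : GoodRes d y) (hj : IsRightLcm x y j) : GoodRes d j := by
  intro b
  obtain ⟨rx, hrx, hrxd⟩ := hx b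
  obtain ⟨ry, hry, hryd⟩ := hy b
  obtain ⟨e, he⟩ := lcm_of_cm hM hrxd hryd
  have hed : LDvd e d := he.2.2 d hrxd hryd
  -- b * e is a common multiple of b and j
  have hbm : LDvd b (b * e) := ldvd_mul b e
  have hxm : LDvd x (b * e) := ldvd_trans hrx.2.1 (mul_ldvd_mul (he.1))
  have hym : LDvd y (b * e) := ldvd_trans hry.2.1 (mul_ldvd_mul (he.2.1))
  have hjm : LDvd j (b * e) := hj.2.2 (b * e) hxm hym
  obtain ⟨r, hr⟩ := res_of_cm hM hbm hjm
  refine ⟨r, hr, ?_⟩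
  have : LDvd (b * r) (b * e) := hr.2.2 (b * e) hbm hjm
  exact ldvd_trans (ldvd_mul_cancel hM this) hed

lemma goodRes_delta (hM : IsDivisibilityMonoid M) {a d : M} (hd : IsLocalDelta a d) : GoodRes d d := by
  classical
  set S : Set M := {r | ∃ c, IsRes c a r} with hS
  have hSd : ∀ r ∈ S, LDvd r d := fun r ⟨c, hc⟩ => hd.2.1 c r hc
  have hSfin : S.Finite := (hM.divisors_finite d).subset hSd
  have key : ∀ s : Set M, s.Finite → s ⊆ S →
      ∃ J, LDvd J d ∧ GoodRes d J ∧ ∀ r ∈ s, LDvd r J := by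
    intro s hs
    refine Set.Finite.induction_on s hs ?_ ?_
    · intro _
      exact ⟨1, one_ldvd d, goodRes_one d, fun r hr => absurd hr (Set.notMem_empty r)⟩
    · intro r s hrs hsfin ih hins
      have hrS : r ∈ S := hins (Set.mem_insert r s)
      obtain ⟨J', hJ'd, hJ'good, hJ'cov⟩ := ih (fun x hx => hins (Set.mem_insert_of_mem r hx))
      have hrd : LDvd r d := hSd r hrS
      obtain ⟨j, hj⟩ := lcm_of_cm hM hrd hJ'd
      have hjd : LDvd j d := hj.2.2 d hrd hJ'd
      obtain ⟨c, hc⟩ := hrS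
      refine ⟨j, hjd, goodRes_lcm hM hrd hJ'd (goodRes_res hM hd hc) hJ'good hj, ?_⟩
      intro r' hr'
      rcases Set.mem_insert_iff.1 hr' with h | h
      · rw [h]; exact hj.1
      · exact ldvd_trans (hJ'cov r' h) hj.2.1
  obtain ⟨J, hJd, hJgood, hJcov⟩ := key S hSfin (le_refl _)
  have hdJ : LDvd d J := hd.2.2 J (fun b r hbr => hJcov r ⟨b, hbr⟩)
  have : J = d := ldvd_antisymm hM hJd hdJ
  rw [this] at hJgood; exact hJgood

lemma isLocalDelta_self (hM : IsDivisibilityMonoid M) {a d : M} (hd : IsLocalDelta a d) : IsLocalDelta d d := by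
  have hg := goodRes_delta hM hd
  refine ⟨fun b => ⟨(hg b).choose, (hg b).choose_spec.1⟩, ?_, ?_⟩
  · intro b r hbr
    obtain ⟨r0, h0, h0d⟩ := hg b
    rw [isRes_unique hM hbr h0]; exact h0d
  · intro m hm
    exact hm 1 d (isRes_one_self d)

end Good

section Height
variable {M : Type*} [Monoid M]

/-- a strict divisibility chain `1 = f 0 ∣ f 1 ∣ ... ∣ f n = x`. -/
def IsChn {M : Type*} [Monoid M] (x : M) (n : ℕ) : Prop :=
  ∃ f : ℕ → M, f 0 = 1 ∧ f n = x ∧ ∀ i < n, LDvd (f i) (f (i+1)) ∧ f i ≠ f (i+1)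

/-- the height of `x` : maximal length of a strict divisor chain up to `x`. -/
noncomputable def hgt {M : Type*} [Monoid M] (x : M) : ℕ := sSup {n | IsChn x n}

lemma chn_ldvd {f : ℕ → M} {n : ℕ} (hstep : ∀ i < n, LDvd (f i) (f (i+1))) :
    ∀ i j, i ≤ j → j ≤ n → LDvd (f i) (f j) := by
  intro i j hij hjn
  obtain ⟨k, rfl⟩ := Nat.le.dest hij
  clear hij
  induction k with
  | zero => exact ldvd_refl _
  | succ k ih =>
      have h1 : LDvd (f i) (f (i + k)) := ih (by omega)
      have h2 : LDvd (f (i + k)) (f (i + k + 1)) := hstep (i + k) (by omega)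
      exact ldvd_trans h1 h2

lemma isChn_exists (x : M) : ∃ n, IsChn x n := by
  by_cases hx : x = 1
  · exact ⟨0, fun _ => 1, rfl, hx.symm, by omega⟩
  · refine ⟨1, fun i => if i = 0 then 1 else x, if_pos rfl, if_neg one_ne_zero, ?_⟩
    intro i hi
    have hi0 : i = 0 := by omega
    subst hi0
    simp only [if_pos rfl, if_neg one_ne_zero]
    exact ⟨one_ldvd x, fun h => hx h.symm⟩

lemma hgt_bdd (hM : IsDivisibilityMonoid M) (x : M) : BddAbove {n | IsChn x n} := by
  classical
  refine ⟨(hM.divisors_finite x).toFinset.card, fun n hn => ?_⟩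
  obtain ⟨f, hf0, hfn, hstep⟩ := hn
  have hdvd : ∀ i ≤ n, LDvd (f i) x := by
    intro i hi
    rw [← hfn]
    exact chn_ldvd (fun j hj => (hstep j hj).1) i n hi le_rfl
  have hne : ∀ i j, i < j → j ≤ n → f i ≠ f j := by
    intro i j hij hjn heq
    have h1 : LDvd (f i) (f (i+1)) := (hstep i (by omega)).1
    have h2 : LDvd (f (i+1)) (f j) := chn_ldvd (fun j hj => (hstep j hj).1) (i+1) j (by omega) hjn
    rw [← heq] at h2
    exact (hstep i (by omega)).2 (ldvd_antisymm hM h1 h2)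
  have hinj : Set.InjOn f ↑(Finset.range (n+1)) := by
    intro i hi j hj hfij
    simp only [Finset.coe_range, Set.mem_Iio] at hi hj
    rcases lt_trichotomy i j with h | h | h
    · exact absurd hfij (hne i j h (by omega))
    · exact h
    · exact absurd hfij.symm (hne j i h (by omega))
  have hmaps : ∀ i ∈ Finset.range (n+1), f i ∈ (hM.divisors_finite x).toFinset := by
    intro i hi
    rw [Set.Finite.mem_toFinset]
    exact hdvd i (by simpa using Nat.lt_succ_iff.mp (Finset.mem_range.mp hi))
  have := Finset.card_le_card_of_injOn f hmaps hinj
  simp only [Finset.card_range] at this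
  omega

lemma le_hgt (hM : IsDivisibilityMonoid M) {x : M} {n : ℕ} (h : IsChn x n) : n ≤ hgt x :=
  le_csSup (hgt_bdd hM x) h

lemma hgt_spec (hM : IsDivisibilityMonoid M) (x : M) : IsChn x (hgt x) :=
  Nat.sSup_mem (isChn_exists x) (hgt_bdd hM x)

lemma hgt_one (hM : IsDivisibilityMonoid M) : hgt (1 : M) = 0 := by
  obtain ⟨f, hf0, hfn, hstep⟩ := hgt_spec hM (1 : M)
  by_contra h
  have hn : 0 < hgt (1 : M) := Nat.pos_of_ne_zero h
  have h01 : LDvd (f 0) (f 1) := (hstep 0 hn).1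
  have hd1 : ∀ i ≤ hgt (1 : M), f i = 1 := by
    intro i hi
    refine ldvd_one_eq hM ?_
    rw [← hfn]
    exact chn_ldvd (fun j hj => (hstep j hj).1) i _ hi le_rfl
  exact (hstep 0 hn).2 (by rw [hd1 0 (by omega), hd1 1 (by omega)])

lemma one_le_hgt (hM : IsDivisibilityMonoid M) {x : M} (hx : x ≠ 1) : 1 ≤ hgt x := by
  apply le_hgt hM
  refine ⟨fun i => if i = 0 then 1 else x, if_pos rfl, if_neg one_ne_zero, ?_⟩
  intro i hi
  have hi0 : i = 0 := by omega
  subst hi0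
  simp only [if_pos rfl, if_neg one_ne_zero]
  exact ⟨one_ldvd x, fun h => hx h.symm⟩

lemma hgt_eq_zero (hM : IsDivisibilityMonoid M) {x : M} (h : hgt x = 0) : x = 1 := by
  by_contra hx
  have := one_le_hgt hM hx
  omega

lemma hgt_lt_of_ldvd (hM : IsDivisibilityMonoid M) {x y : M} (h : LDvd x y) (hne : x ≠ y) :
    hgt x < hgt y := by
  obtain ⟨f, hf0, hfn, hstep⟩ := hgt_spec hM x
  set n := hgt x with hn
  have : IsChn y (n + 1) := by
    refine ⟨fun i => if i ≤ n then f i else y, ?_, ?_, ?_⟩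
    · beta_reduce; rw [if_pos (Nat.zero_le n)]; exact hf0
    · beta_reduce; rw [if_neg (by omega)]
    intro i hi
    beta_reduce
    by_cases hin : i + 1 ≤ n
    · rw [if_pos (by omega : i ≤ n), if_pos hin]
      exact hstep i (by omega)
    · have hieq : i = n := by omega
      subst hieq
      rw [if_pos le_rfl, if_neg (by omega), hfn]
      exact ⟨h, hne⟩
  have := le_hgt hM this
  omega

lemma hgt_le_of_ldvd (hM : IsDivisibilityMonoid M) {x y : M} (h : LDvd x y) :
    hgt x ≤ hgt y := by
  rcases eq_or_ne x y with rfl | hne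
  · exact le_rfl
  · exact le_of_lt (hgt_lt_of_ldvd hM h hne)

end Height

section HgtMul
variable {M : Type*} [Monoid M]

lemma hgt_mul_le (hM : IsDivisibilityMonoid M) (x y : M) :
    hgt x + hgt y ≤ hgt (x * y) := by
  by_cases hy : y = 1
  · subst hy; rw [mul_one, hgt_one hM]; omega
  obtain ⟨f, hf0, hfm, hfstep⟩ := hgt_spec hM x
  obtain ⟨g, hg0, hgk, hgstep⟩ := hgt_spec hM y
  set m := hgt x with hm
  set k := hgt y with hk
  have hk1 : 1 ≤ k := one_le_hgt hM hy
  apply le_hgt hM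
  refine ⟨fun i => if i ≤ m then f i else x * g (i - m), ?_, ?_, ?_⟩
  · beta_reduce; rw [if_pos (Nat.zero_le m)]; exact hf0
  · beta_reduce
    rw [if_neg (by omega)]
    have : m + k - m = k := by omega
    rw [this, hgk]
  intro i hi
  beta_reduce
  rcases lt_trichotomy i m with hlt | heq | hgt'
  · rw [if_pos (by omega : i ≤ m), if_pos (by omega : i + 1 ≤ m)]
    exact hfstep i hlt
  · subst heq
    rw [if_pos le_rfl, if_neg (by omega)]
    have h1 : m + 1 - m = 1 := by omega
    rw [h1, hfm]
    have hg01 : LDvd (g 0) (g 1) ∧ g 0 ≠ g 1 := hgstep 0 (by omega)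
    constructor
    · exact ldvd_mul x (g 1)
    · intro hxx
      apply hg01.2
      rw [hg0]
      exact hM.mul_left_cancel x 1 (g 1) (by rw [mul_one, ← hxx])
  · rw [if_neg (by omega), if_neg (by omega)]
    have h1 : i + 1 - m = (i - m) + 1 := by omega
    rw [h1]
    have hstep' : LDvd (g (i - m)) (g (i - m + 1)) ∧ g (i - m) ≠ g (i - m + 1) :=
      hgstep (i - m) (by omega)
    constructor
    · exact mul_ldvd_mul hstep'.1
    · intro hxx
      exact hstep'.2 (hM.mul_left_cancel x _ _ hxx)

lemma hgt_le_mul (hM : IsDivisibilityMonoid M) (x y : M) :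
    hgt (x * y) ≤ hgt x + hgt y := by
  classical
  obtain ⟨f0, hf0, hfn, hfstep⟩ := hgt_spec hM (x * y)
  set n := hgt (x * y) with hn
  set f : ℕ → M := fun i => if i ≤ n then f0 i else x * y with hf
  have hfn' : f n = x * y := by rw [hf]; beta_reduce; rw [if_pos le_rfl, hfn]
  have hf0' : f 0 = 1 := by rw [hf]; beta_reduce; rw [if_pos (Nat.zero_le n)]; exact hf0
  have hstep : ∀ i < n, LDvd (f i) (f (i+1)) ∧ f i ≠ f (i+1) := by
    intro i hi
    rw [hf]; beta_reduce
    rw [if_pos (by omega : i ≤ n), if_pos (by omega : i + 1 ≤ n)]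
    exact hfstep i hi
  have hdvd : ∀ i, LDvd (f i) (x * y) := by
    intro i
    by_cases hin : i ≤ n
    · rw [← hfn']
      exact chn_ldvd (fun j hj => (hstep j hj).1) i n hin le_rfl
    · rw [hf]; beta_reduce; rw [if_neg hin]; exact ldvd_refl _
  -- gcds with x and joins with x
  set A : ℕ → M := fun i => (hM.exists_gcd (f i) x).choose with hAdef
  have hA : ∀ i, IsLeftGcd (f i) x (A i) :=
    fun i => (hM.exists_gcd (f i) x).choose_spec
  set J : ℕ → M := fun i => (hM.exists_join (x * y) (f i) x (hdvd i) (ldvd_mul x y)).choose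
    with hJdef
  have hJ : ∀ i, IsJoinIn (x * y) (f i) x (J i) :=
    fun i => (hM.exists_join (x * y) (f i) x (hdvd i) (ldvd_mul x y)).choose_spec
  have hJx : ∀ i, LDvd x (J i) := fun i => (hJ i).2.2.1
  set U : ℕ → M := fun i => (hJx i).choose with hUdef
  have hU : ∀ i, J i = x * U i := fun i => (hJx i).choose_spec
  -- endpoints
  have hA0 : A 0 = 1 := by
    apply ldvd_one_eq hM
    have := (hA 0).1
    rwa [hf0'] at this
  have hU0 : U 0 = 1 := by
    have hJ0 : J 0 = x := by
      apply isJoinIn_unique hM (hJ 0)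
      rw [hf0']
      exact ⟨ldvd_mul x y, one_ldvd x, ldvd_refl x, fun m _ _ h2 => h2⟩
    apply hM.mul_left_cancel x
    rw [← hU 0, hJ0, mul_one]
  have hAn : A n = x := by
    apply ldvd_antisymm hM (hA n).2.1
    apply (hA n).2.2 x _ (ldvd_refl x)
    rw [hfn']; exact ldvd_mul x y
  have hUn : U n = y := by
    have hJn : J n = x * y := by
      apply isJoinIn_unique hM (hJ n)
      rw [hfn']
      exact ⟨ldvd_refl _, ldvd_refl _, ldvd_mul x y, fun m _ h1 _ => h1⟩
    apply hM.mul_left_cancel x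
    rw [← hU n, hJn]
  -- monotonicity
  have hAmono : ∀ i < n, LDvd (A i) (A (i+1)) := by
    intro i hi
    exact (hA (i+1)).2.2 (A i) (ldvd_trans (hA i).1 (hstep i hi).1) (hA i).2.1
  have hJmono : ∀ i < n, LDvd (J i) (J (i+1)) := by
    intro i hi
    exact (hJ i).2.2.2 (J (i+1)) (hJ (i+1)).1
      (ldvd_trans (hstep i hi).1 (hJ (i+1)).2.1) (hJ (i+1)).2.2.1
  have hUmono : ∀ i < n, LDvd (U i) (U (i+1)) := by
    intro i hi
    apply ldvd_mul_cancel hM (a := x)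
    rw [← hU i, ← hU (i+1)]
    exact hJmono i hi
  -- strictness via distributivity
  have hstrict : ∀ i < n, A i = A (i+1) → U i = U (i+1) → False := by
    intro i hi hAe hUe
    have hJe : J i = J (i+1) := by rw [hU i, hU (i+1), hUe]
    have key : f (i+1) = f i := by
      apply hM.distrib (x * y) (f (i+1)) (f i) x (hdvd (i+1)) (hdvd i) (ldvd_mul x y)
        (J i) (f (i+1)) (f i) (A (i+1)) (f i) (hJ i)
      · -- IsLeftGcd (f (i+1)) (J i) (f (i+1))
        refine ⟨ldvd_refl _, ?_, fun e h1 _ => h1⟩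
        rw [hJe]
        exact (hJ (i+1)).2.1
      · -- IsLeftGcd (f (i+1)) (f i) (f i)
        exact ⟨(hstep i hi).1, ldvd_refl _, fun e _ h2 => h2⟩
      · exact hA (i+1)
      · -- IsJoinIn (x*y) (f i) (A (i+1)) (f i)
        refine ⟨hdvd i, ldvd_refl _, ?_, fun m _ h1 _ => h1⟩
        rw [← hAe]
        exact (hA i).1
    exact (hstep i hi).2 key.symm
  have hlt : ∀ i < n, hgt (A i) + hgt (U i) < hgt (A (i+1)) + hgt (U (i+1)) := by
    intro i hi
    rcases eq_or_ne (A i) (A (i+1)) with hAe | hAe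
    · rcases eq_or_ne (U i) (U (i+1)) with hUe | hUe
      · exact (hstrict i hi hAe hUe).elim
      · exact add_lt_add_of_le_of_lt (le_of_eq (by rw [hAe]))
          (hgt_lt_of_ldvd hM (hUmono i hi) hUe)
    · exact add_lt_add_of_lt_of_le (hgt_lt_of_ldvd hM (hAmono i hi) hAe)
        (hgt_le_of_ldvd hM (hUmono i hi))
  have hind : ∀ i ≤ n, i ≤ hgt (A i) + hgt (U i) := by
    intro i
    induction i with
    | zero => omega
    | succ i ih =>
        intro hi
        have h1 := ih (by omega)
        have h2 := hlt i (by omega)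
        omega
  have := hind n le_rfl
  rw [hAn, hUn] at this
  exact this

lemma hgt_mul (hM : IsDivisibilityMonoid M) (x y : M) :
    hgt (x * y) = hgt x + hgt y :=
  le_antisymm (hgt_le_mul hM x y) (hgt_mul_le hM x y)

lemma hgt_eq_one_iff (hM : IsDivisibilityMonoid M) {s : M} :
    hgt s = 1 ↔ s ∈ Irr M := by
  constructor
  · intro h
    refine ⟨fun h1 => by rw [h1, hgt_one hM] at h; omega, ?_⟩
    intro b c hbc
    have := hgt_mul hM b c
    rw [← hbc, h] at this
    rcases Nat.eq_zero_or_pos (hgt b) with hb | hb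
    · exact Or.inl (hgt_eq_zero hM hb)
    · right
      apply hgt_eq_zero hM
      omega
  · intro hs
    obtain ⟨f, hf0, hfn, hfstep⟩ := hgt_spec hM s
    set n := hgt s with hn
    have h1 : 1 ≤ n := one_le_hgt hM hs.1
    by_contra hne
    have h2 : 2 ≤ n := by omega
    have hd1 : LDvd (f 1) s := by
      rw [← hfn]
      exact chn_ldvd (fun j hj => (hfstep j hj).1) 1 n h1 le_rfl
    obtain ⟨c, hc⟩ := hd1
    rcases hs.2 (f 1) c hc with h | h
    · exact (hfstep 0 (by omega)).2 (by rw [hf0, h])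
    · have hf1s : f 1 = s := by rw [hc, h, mul_one]
      have hd2 : LDvd (f 2) s := by
        rw [← hfn]
        exact chn_ldvd (fun j hj => (hfstep j hj).1) 2 n h2 le_rfl
      have h12 : LDvd (f 1) (f 2) := (hfstep 1 (by omega)).1
      rw [hf1s] at h12
      have hf2 : f 2 = s := ldvd_antisymm hM hd2 h12
      exact (hfstep 1 (by omega)).2 (by rw [hf1s, hf2])

end HgtMul

theorem stmt15 {M : Type*} [Monoid M] (hM : IsDivisibilityMonoid M)
    (a d : M) (hd : IsLocalDelta a d) :
    IsLocalDelta d d ∧ QuasiCentral d := by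
  classical
  refine ⟨isLocalDelta_self hM hd, ?_⟩
  have hg := goodRes_delta hM hd
  have key : ∀ x : M, ∃ u, x * d = d * u := by
    intro x
    obtain ⟨r, hr, hrd⟩ := hg x
    obtain ⟨q, hq⟩ := hr.2.1
    obtain ⟨t, ht⟩ := hrd
    refine ⟨q * t, ?_⟩
    calc x * d = x * (r * t) := by rw [← ht]
    _ = (x * r) * t := by rw [mul_assoc]
    _ = (d * q) * t := by rw [hq]
    _ = d * (q * t) := by rw [mul_assoc]
  set ψ : M → M := fun x => (key x).choose with hψdef
  have hψs : ∀ x, x * d = d * ψ x := fun x => (key x).choose_spec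
  have hinj : Set.InjOn ψ (Irr M) := by
    intro s _ t _ he
    apply hM.mul_right_cancel d
    rw [hψs s, hψs t, he]
  have hmaps : ∀ s ∈ Irr M, ψ s ∈ Irr M := by
    intro s hs
    rw [← hgt_eq_one_iff hM]
    have h1 := hgt_mul hM s d
    have h2 := hgt_mul hM d (ψ s)
    rw [hψs s] at h1
    have hs1 : hgt s = 1 := (hgt_eq_one_iff hM).2 hs
    omega
  have himg : ψ '' Irr M = Irr M := by
    apply Set.eq_of_subset_of_ncard_le
    · rintro z ⟨s, hs, rfl⟩
      exact hmaps s hs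
    · rw [Set.ncard_image_of_injOn hinj]
    · exact hM.irr_finite
  show (fun x => d * x) '' Irr M = (fun x => x * d) '' Irr M
  ext z
  constructor
  · rintro ⟨t, ht, rfl⟩
    rw [← himg] at ht
    obtain ⟨s, hs, rfl⟩ := ht
    exact ⟨s, hs, hψs s⟩
  · rintro ⟨s, hs, rfl⟩
    exact ⟨ψ s, hmaps s hs, (hψs s).symm⟩
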